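/- Let ℓ ≥ 1 and v ≥ 2 be integers, and let F be the free group on generators x₁, x₂, …, x_{ℓ+2}. Let H be the subgroup generated by the elements x₁^i x₂ x₁^{-(i+1)} for 0 ≤ i ≤ v−2 together with x₃, x₄, …, x_{ℓ+2}, and let K be the subgroup generated by x₁ and x₂. Then r̄(H) = v + ℓ − 2 and r̄(K) = 1; in particular rank(H) = v + ℓ − 1 and rank(K) = 2. -/

import Mathlib

/-- The rank of a group: the minimal cardinality of a (finite) generating set. -/
noncomputable def grank (G : Type*) [Group G] : ℕ :=
  sInf {n : ℕ | ∃ S : Finset G, S.card = n ∧ Subgroup.closure (S : Set G) = ⊤}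

/-- The reduced rank of a group: `max (0, rank - 1)` (truncated subtraction). -/
noncomputable def rbar (G : Type*) [Group G] : ℕ := grank G - 1

section LowerBound

open Cardinal

/-- If a group `G` maps to an abelian group and the image contains `n` linearly
independent vectors, then any generating set of `G` has at least `n` elements. -/
lemma le_card_of_linearIndependent {G : Type} [Group G] {M : Type} [AddCommGroup M]
    (f : G →* Multiplicative M) {n : ℕ} (b : Fin n → M)
    (hb : LinearIndependent ℤ b) (hmem : ∀ j, Multiplicative.ofAdd (b j) ∈ f.range)
    {m : ℕ} (hm : ∃ S : Finset G, S.card = m ∧ Subgroup.closure (S : Set G) = ⊤) :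
    n ≤ m := by
  obtain ⟨S, rfl, hS⟩ := hm
  set s : Set M := Multiplicative.toAdd '' (⇑f '' (S : Set G)) with hs
  have hrange : ∀ j, b j ∈ Submodule.span ℤ s := by
    intro j
    have h1 : Multiplicative.ofAdd (b j) ∈ Subgroup.closure (⇑f '' (S : Set G)) := by
      rw [← MonoidHom.map_closure, hS]
      obtain ⟨g, hg⟩ := hmem j
      exact ⟨g, Subgroup.mem_top g, hg⟩
    have h2 : Subgroup.closure (⇑f '' (S : Set G)) ≤
        AddSubgroup.toSubgroup (Submodule.toAddSubgroup (Submodule.span ℤ s)) := by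
      refine (Subgroup.closure_le _).2 ?_
      intro x hx
      have h3 : Multiplicative.toAdd x ∈ s := Set.mem_image_of_mem _ hx
      exact show (Multiplicative.toAdd x) ∈ Submodule.span ℤ s from Submodule.subset_span h3
    exact h2 h1
  set N := Submodule.span ℤ s with hN
  have hb' : LinearIndependent ℤ (fun j => (⟨b j, hrange j⟩ : N)) :=
    LinearIndependent.of_comp N.subtype (by simpa [Function.comp_def] using hb)
  have h1 : (n : Cardinal) ≤ Module.rank ℤ N := by
    simpa using hb'.cardinal_le_rank
  have h2 : Module.rank ℤ N ≤ #s := rank_span_le s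
  have h3 : (#s : Cardinal) ≤ S.card := by
    calc #s ≤ #(⇑f '' (S : Set G)) := Cardinal.mk_image_le
      _ ≤ #(S : Set G) := Cardinal.mk_image_le
      _ = S.card := Cardinal.mk_coe_finset
  exact_mod_cast h1.trans (h2.trans h3)

end LowerBound

section GrpW

/-- The wreath-like group `(ℤ^ℤ × ℤ^ℓ) ⋊ ℤ`, with `ℤ` acting by shifting coordinates. -/
@[ext] structure GrpW (ℓ : ℕ) where
  a : ℤ → ℤ
  b : Fin ℓ → ℤ
  t : ℤ

namespace GrpW
variable {ℓ : ℕ}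

instance : Mul (GrpW ℓ) := ⟨fun p q => ⟨p.a + fun x => q.a (x - p.t), p.b + q.b, p.t + q.t⟩⟩
instance : One (GrpW ℓ) := ⟨⟨0, 0, 0⟩⟩
instance : Inv (GrpW ℓ) := ⟨fun p => ⟨-fun x => p.a (x + p.t), -p.b, -p.t⟩⟩

@[simp] lemma mul_a (p q : GrpW ℓ) : (p * q).a = p.a + fun x => q.a (x - p.t) := rfl
@[simp] lemma mul_b (p q : GrpW ℓ) : (p * q).b = p.b + q.b := rfl
@[simp] lemma mul_t (p q : GrpW ℓ) : (p * q).t = p.t + q.t := rfl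
@[simp] lemma one_a : (1 : GrpW ℓ).a = 0 := rfl
@[simp] lemma one_b : (1 : GrpW ℓ).b = 0 := rfl
@[simp] lemma one_t : (1 : GrpW ℓ).t = 0 := rfl
@[simp] lemma inv_a (p : GrpW ℓ) : (p⁻¹).a = -fun x => p.a (x + p.t) := rfl
@[simp] lemma inv_b (p : GrpW ℓ) : (p⁻¹).b = -p.b := rfl
@[simp] lemma inv_t (p : GrpW ℓ) : (p⁻¹).t = -p.t := rfl

instance : Group (GrpW ℓ) where
  mul_assoc p q r := by
    ext x
    · simp [add_assoc, sub_sub]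
    · simp [add_assoc]
    · simp [add_assoc]
  one_mul p := by ext x <;> simp
  mul_one p := by ext x <;> simp
  inv_mul_cancel p := by
    ext x
    · simp [sub_neg_eq_add]
    · simp
    · simp

/-- The projection onto the `ℤ`-part is a homomorphism. -/
def proj : GrpW ℓ →* Multiplicative ℤ where
  toFun p := Multiplicative.ofAdd p.t
  map_one' := rfl
  map_mul' p q := rfl

/-- The inclusion of the `ℤ`-part. -/
def iota : Multiplicative ℤ →* GrpW ℓ where
  toFun t := ⟨0, 0, t.toAdd⟩
  map_one' := rfl
  map_mul' s t := by ext x <;> simp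

@[simp] lemma iota_a (n : Multiplicative ℤ) : (iota (ℓ := ℓ) n).a = 0 := rfl
@[simp] lemma iota_b (n : Multiplicative ℤ) : (iota (ℓ := ℓ) n).b = 0 := rfl
@[simp] lemma iota_t (n : Multiplicative ℤ) : (iota (ℓ := ℓ) n).t = n.toAdd := rfl

end GrpW

/-- Images of the free generators in `GrpW`. -/
def wgen (ℓ : ℕ) : Fin (ℓ + 2) → GrpW ℓ := fun j =>
  if h0 : (j : ℕ) = 0 then ⟨0, 0, 1⟩
  else if h1 : (j : ℕ) = 1 then ⟨fun x => if x = 0 then 1 else 0, 0, 1⟩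
  else ⟨0, Pi.single ⟨(j : ℕ) - 2, by have := j.isLt; omega⟩ 1, 0⟩

lemma psi_x1_zpow (ℓ : ℕ) (n : ℤ) :
    FreeGroup.lift (wgen ℓ) ((FreeGroup.of (⟨0, by simp⟩ : Fin (ℓ + 2))) ^ n)
      = GrpW.iota (Multiplicative.ofAdd n) := by
  have h : FreeGroup.lift (wgen ℓ) (FreeGroup.of (⟨0, by simp⟩ : Fin (ℓ + 2)))
      = GrpW.iota (Multiplicative.ofAdd (1 : ℤ)) := by
    rw [FreeGroup.lift_apply_of]
    ext x <;> simp [wgen]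
  rw [map_zpow, h, ← map_zpow, ← ofAdd_zsmul]
  norm_num

lemma psi_gen (ℓ : ℕ) (i : ℕ) :
    FreeGroup.lift (wgen ℓ)
      ((FreeGroup.of (⟨0, by simp⟩ : Fin (ℓ + 2))) ^ (i : ℤ) *
        FreeGroup.of (⟨1, by simp⟩ : Fin (ℓ + 2)) *
        (FreeGroup.of (⟨0, by simp⟩ : Fin (ℓ + 2))) ^ (-((i : ℤ) + 1)))
      = ⟨fun x => if x = (i : ℤ) then 1 else 0, 0, 0⟩ := by
  rw [map_mul, map_mul, psi_x1_zpow, psi_x1_zpow, FreeGroup.lift_apply_of]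
  have h2 : wgen ℓ (⟨1, by simp⟩ : Fin (ℓ + 2))
      = ⟨fun x => if x = 0 then 1 else 0, 0, 1⟩ := by simp [wgen]
  rw [h2]
  ext x
  · simp only [GrpW.mul_a, GrpW.iota_a, GrpW.iota_t, Pi.add_apply, Pi.zero_apply, toAdd_ofAdd]
    simp [sub_eq_zero]
  · simp
  · simp only [GrpW.mul_t, GrpW.iota_t, toAdd_ofAdd]
    ring

lemma psi_ofj (ℓ : ℕ) (j : Fin (ℓ + 2)) (hj : 2 ≤ (j : ℕ)) :
    FreeGroup.lift (wgen ℓ) (FreeGroup.of j)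
      = ⟨0, Pi.single ⟨(j : ℕ) - 2, by have := j.isLt; omega⟩ 1, 0⟩ := by
  rw [FreeGroup.lift_apply_of]
  have h0 : ¬ (j : ℕ) = 0 := by omega
  have h1 : ¬ (j : ℕ) = 1 := by omega
  simp only [wgen]
  rw [dif_neg h0, dif_neg h1]

end GrpW

section Main

open Subgroup Multiplicative

/-- The independent vectors hit by the generators of `H`. -/
def bvec (ℓ v : ℕ) : Fin (v - 1 + ℓ) → (ℤ → ℤ) × (Fin ℓ → ℤ) := fun k =>
  if h : (k : ℕ) < v - 1 then (fun x => if x = ((k : ℕ) : ℤ) then 1 else 0, 0)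
  else (0, Pi.single (⟨(k : ℕ) - (v - 1), by have := k.isLt; omega⟩ : Fin ℓ) 1)

lemma bvec_linearIndependent (ℓ v : ℕ) : LinearIndependent ℤ (bvec ℓ v) := by
  classical
  set E : ((ℤ → ℤ) × (Fin ℓ → ℤ)) →ₗ[ℤ] (Fin (v - 1 + ℓ) → ℤ) :=
    LinearMap.pi (fun (k : Fin (v - 1 + ℓ)) =>
      if h : (k : ℕ) < v - 1
      then (LinearMap.proj (((k : ℕ) : ℤ))).comp (LinearMap.fst ℤ (ℤ → ℤ) (Fin ℓ → ℤ))
      else (LinearMap.proj (⟨(k : ℕ) - (v - 1), by have := k.isLt; omega⟩ : Fin ℓ)).comp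
        (LinearMap.snd ℤ (ℤ → ℤ) (Fin ℓ → ℤ))) with hE
  apply LinearIndependent.of_comp E
  have hcomp : ⇑E ∘ bvec ℓ v = fun (k : Fin (v - 1 + ℓ)) => Pi.single k (1 : ℤ) := by
    funext k
    funext k'
    rw [Function.comp_apply, hE, LinearMap.pi_apply, Pi.single_apply]
    by_cases h1 : (k' : ℕ) < v - 1
    · rw [dif_pos h1]
      simp only [LinearMap.comp_apply, LinearMap.fst_apply, LinearMap.proj_apply]
      by_cases h2 : (k : ℕ) < v - 1
      · rw [bvec]
        simp only [dif_pos h2]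
        by_cases h3 : k' = k
        · subst h3
          rw [if_pos rfl, if_pos rfl]
        · rw [if_neg (fun hc => h3 (Fin.ext (by exact_mod_cast hc))), if_neg h3]
      · rw [bvec]
        simp only [dif_neg h2, Pi.zero_apply]
        rw [if_neg (fun hc : k' = k => by subst hc; exact h2 h1)]
    · rw [dif_neg h1]
      simp only [LinearMap.comp_apply, LinearMap.snd_apply, LinearMap.proj_apply]
      by_cases h2 : (k : ℕ) < v - 1
      · rw [bvec]
        simp only [dif_pos h2, Pi.zero_apply]
        rw [if_neg (fun hc : k' = k => by subst hc; exact h1 h2)]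
      · rw [bvec]
        simp only [dif_neg h2]
        rw [Pi.single_apply]
        by_cases h3 : k' = k
        · subst h3
          rw [if_pos rfl, if_pos rfl]
        · rw [if_neg (fun hc => h3 ?_), if_neg h3]
          have hc2 := congrArg Fin.val hc
          simp only at hc2
          apply Fin.ext
          omega
  rw [hcomp]
  have hpi := (Pi.basisFun ℤ (Fin (v - 1 + ℓ))).linearIndependent
  have hfn : ⇑(Pi.basisFun ℤ (Fin (v - 1 + ℓ))) = fun k => Pi.single k (1 : ℤ) := by
    funext k
    exact Pi.basisFun_apply ℤ (Fin (v - 1 + ℓ)) k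
  rwa [hfn] at hpi

lemma grank_H (ℓ v : ℕ) (hℓ : 1 ≤ ℓ) (hv : 2 ≤ v) :
    grank ↥(Subgroup.closure
      ({g | ∃ i : ℕ, i ≤ v - 2 ∧ g = (FreeGroup.of (⟨0, by simp⟩ : Fin (ℓ + 2))) ^ (i : ℤ) *
          FreeGroup.of (⟨1, by simp⟩ : Fin (ℓ + 2)) *
          (FreeGroup.of (⟨0, by simp⟩ : Fin (ℓ + 2))) ^ (-((i : ℤ) + 1))} ∪
       {g | ∃ j : Fin (ℓ + 2), 2 ≤ (j : ℕ) ∧ g = FreeGroup.of j})) = v - 1 + ℓ := by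
  classical
  set e0 : Fin (ℓ + 2) := ⟨0, by simp⟩ with he0
  set e1 : Fin (ℓ + 2) := ⟨1, by simp⟩ with he1
  set gen : ℕ → FreeGroup (Fin (ℓ + 2)) := fun i =>
    (FreeGroup.of e0) ^ (i : ℤ) * FreeGroup.of e1 * (FreeGroup.of e0) ^ (-((i : ℤ) + 1))
    with hgen
  set sH : Set (FreeGroup (Fin (ℓ + 2))) :=
    ({g | ∃ i : ℕ, i ≤ v - 2 ∧ g = gen i} ∪
     {g | ∃ j : Fin (ℓ + 2), 2 ≤ (j : ℕ) ∧ g = FreeGroup.of j}) with hsH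
  -- injectivity of generators under ψ
  have hpsi_gen : ∀ i : ℕ, FreeGroup.lift (wgen ℓ) (gen i)
      = ⟨fun x => if x = (i : ℤ) then 1 else 0, 0, 0⟩ := fun i => psi_gen ℓ i
  have hgen_inj : ∀ i i' : ℕ, gen i = gen i' → i = i' := by
    intro i i' h
    have h2 := congrFun (congrArg GrpW.a (congrArg (FreeGroup.lift (wgen ℓ)) h)) (i : ℤ)
    rw [hpsi_gen, hpsi_gen] at h2
    by_contra hne
    simp [Int.natCast_inj, hne] at h2
  have hgen_ne_of : ∀ (i : ℕ) (j : Fin (ℓ + 2)), 2 ≤ (j : ℕ) → gen i ≠ FreeGroup.of j := by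
    intro i j hj h
    have h2 := congrFun (congrArg GrpW.a (congrArg (FreeGroup.lift (wgen ℓ)) h)) (i : ℤ)
    rw [hpsi_gen, psi_ofj ℓ j hj] at h2
    simp at h2
  -- the finite generating set inside the free group
  set T : Finset (FreeGroup (Fin (ℓ + 2))) :=
    (Finset.range (v - 1)).image gen ∪
      (Finset.univ : Finset (Fin ℓ)).image
        (fun (k : Fin ℓ) => FreeGroup.of (⟨(k : ℕ) + 2, by have := k.isLt; omega⟩ : Fin (ℓ + 2)))
      with hT
  have hTc : (T : Set (FreeGroup (Fin (ℓ + 2)))) = sH := by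
    rw [hT, hsH]
    ext g
    simp only [Finset.coe_union, Finset.coe_image, Finset.coe_range, Finset.coe_univ,
      Set.image_univ, Set.mem_union, Set.mem_image, Set.mem_range, Set.mem_setOf_eq]
    refine or_congr ?_ ?_
    · constructor
      · rintro ⟨i, hi, rfl⟩
        exact ⟨i, by have := Set.mem_Iio.mp hi; omega, rfl⟩
      · rintro ⟨i, hi, rfl⟩
        exact ⟨i, Set.mem_Iio.mpr (by omega), rfl⟩
    · constructor
      · rintro ⟨k, rfl⟩
        exact ⟨⟨(k : ℕ) + 2, by have := k.isLt; omega⟩, by simp, rfl⟩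
      · rintro ⟨j, hj, rfl⟩
        refine ⟨⟨(j : ℕ) - 2, by have := j.isLt; omega⟩, ?_⟩
        congr 1
        apply Fin.ext
        simp only
        omega
  have hinj2 : Function.Injective
      (fun (k : Fin ℓ) => FreeGroup.of (⟨(k : ℕ) + 2, by have := k.isLt; omega⟩ : Fin (ℓ + 2))) := by
    intro a b h
    have h2 := congrArg Fin.val (FreeGroup.of_injective h)
    simp only at h2
    apply Fin.ext
    omega
  have hTcard : T.card = v - 1 + ℓ := by
    have hdisj : Disjoint ((Finset.range (v - 1)).image gen)
        ((Finset.univ : Finset (Fin ℓ)).image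
          (fun (k : Fin ℓ) =>
            FreeGroup.of (⟨(k : ℕ) + 2, by have := k.isLt; omega⟩ : Fin (ℓ + 2)))) := by
      rw [Finset.disjoint_left]
      intro g hg1 hg2
      simp only [Finset.mem_image, Finset.mem_range, Finset.mem_univ, true_and] at hg1 hg2
      obtain ⟨i, hi, rfl⟩ := hg1
      obtain ⟨k, hk⟩ := hg2
      exact hgen_ne_of i _ (by simp) hk.symm
    rw [hT, Finset.card_union_of_disjoint hdisj,
      Finset.card_image_of_injOn (fun a _ b _ h => hgen_inj a b h),
      Finset.card_image_of_injective _ hinj2, Finset.card_range, Finset.card_univ,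
      Fintype.card_fin]
  -- upper bound witness
  have hTH : ∀ g ∈ T, g ∈ Subgroup.closure sH := by
    intro g hg
    exact Subgroup.subset_closure (hTc ▸ hg)
  set S : Finset ↥(Subgroup.closure sH) :=
    T.attach.image (fun t => ⟨t.1, hTH t.1 t.2⟩) with hS
  have hSinj : Function.Injective
      (fun (t : {x // x ∈ T}) => (⟨t.1, hTH t.1 t.2⟩ : ↥(Subgroup.closure sH))) := by
    intro t t' h
    have h2 := congrArg Subtype.val h
    exact Subtype.ext h2
  have hScard : S.card = v - 1 + ℓ := by
    rw [hS, Finset.card_image_of_injective _ hSinj, Finset.card_attach, hTcard]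
  have hStop : Subgroup.closure (S : Set ↥(Subgroup.closure sH)) = ⊤ := by
    have hpre : (S : Set ↥(Subgroup.closure sH))
        = (Subgroup.closure sH).subtype ⁻¹' (T : Set (FreeGroup (Fin (ℓ + 2)))) := by
      ext x
      constructor
      · intro hx
        rw [hS] at hx
        simp only [Finset.coe_image, Set.mem_image, Finset.mem_coe, Finset.mem_attach] at hx
        obtain ⟨t, -, ht⟩ := hx
        rw [← ht]
        exact t.2
      · intro hx
        rw [hS]
        simp only [Finset.coe_image, Set.mem_image, Finset.mem_coe, Finset.mem_attach]
        exact ⟨⟨x.1, hx⟩, trivial, Subtype.ext rfl⟩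
    rw [hpre, hTc]
    exact Subgroup.closure_preimage_eq_top sH
  -- lower bound: the homomorphism θ
  have ht : ∀ g ∈ Subgroup.closure sH, (FreeGroup.lift (wgen ℓ) g).t = 0 := by
    have hle : Subgroup.closure sH ≤ (GrpW.proj.comp (FreeGroup.lift (wgen ℓ))).ker := by
      rw [Subgroup.closure_le, hsH]
      rintro g' (⟨i, hi, rfl⟩ | ⟨j, hj, rfl⟩)
      · show GrpW.proj (FreeGroup.lift (wgen ℓ) (gen i)) = 1
        rw [hpsi_gen]
        rfl
      · show GrpW.proj (FreeGroup.lift (wgen ℓ) (FreeGroup.of j)) = 1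
        rw [psi_ofj ℓ j hj]
        rfl
    intro g hg
    have h2 := hle hg
    rw [MonoidHom.mem_ker] at h2
    have h3 : Multiplicative.toAdd (GrpW.proj (FreeGroup.lift (wgen ℓ) g))
        = Multiplicative.toAdd (1 : Multiplicative ℤ) := by
      rw [show GrpW.proj (FreeGroup.lift (wgen ℓ) g) = (GrpW.proj.comp (FreeGroup.lift (wgen ℓ))) g
        from rfl, h2]
    exact h3
  set θ : ↥(Subgroup.closure sH) →* Multiplicative ((ℤ → ℤ) × (Fin ℓ → ℤ)) :=
    { toFun := fun g => Multiplicative.ofAdd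
        ((FreeGroup.lift (wgen ℓ) g.1).a, (FreeGroup.lift (wgen ℓ) g.1).b),
      map_one' := by
        show Multiplicative.ofAdd _ = Multiplicative.ofAdd 0
        rw [show ((1 : ↥(Subgroup.closure sH)) : FreeGroup (Fin (ℓ + 2))) = 1 from rfl]
        simp [Prod.ext_iff]
      map_mul' := by
        intro g h
        show Multiplicative.ofAdd _ = Multiplicative.ofAdd _ * Multiplicative.ofAdd _
        rw [← ofAdd_add]
        congr 1
        rw [show ((g * h : ↥(Subgroup.closure sH)) : FreeGroup (Fin (ℓ + 2))) = g.1 * h.1 from rfl,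
          map_mul, Prod.mk_add_mk, Prod.mk.injEq]
        constructor
        · rw [GrpW.mul_a, ht g.1 g.2]
          funext x
          simp
        · rw [GrpW.mul_b] } with hθ
  have hbb : LinearIndependent ℤ (bvec ℓ v) := bvec_linearIndependent ℓ v
  have hmem : ∀ k, Multiplicative.ofAdd (bvec ℓ v k) ∈ θ.range := by
    intro k
    by_cases h : (k : ℕ) < v - 1
    · have hmem1 : gen (k : ℕ) ∈ Subgroup.closure sH := by
        apply Subgroup.subset_closure
        rw [hsH]
        exact Or.inl ⟨(k : ℕ), by omega, rfl⟩
      refine ⟨⟨gen (k : ℕ), hmem1⟩, ?_⟩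
      have hval : θ ⟨gen (k : ℕ), hmem1⟩ = Multiplicative.ofAdd
          ((FreeGroup.lift (wgen ℓ) (gen (k : ℕ))).a,
           (FreeGroup.lift (wgen ℓ) (gen (k : ℕ))).b) := rfl
      rw [hval, hpsi_gen, bvec]
      simp only [dif_pos h]
    · have hjlt : (k : ℕ) - (v - 1) + 2 < ℓ + 2 := by have := k.isLt; omega
      have hj2 : 2 ≤ ((⟨(k : ℕ) - (v - 1) + 2, hjlt⟩ : Fin (ℓ + 2)) : ℕ) := by
        simp
      have hmem1 : FreeGroup.of (⟨(k : ℕ) - (v - 1) + 2, hjlt⟩ : Fin (ℓ + 2))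
          ∈ Subgroup.closure sH := by
        apply Subgroup.subset_closure
        rw [hsH]
        exact Or.inr ⟨_, hj2, rfl⟩
      refine ⟨⟨_, hmem1⟩, ?_⟩
      have hval : θ ⟨FreeGroup.of (⟨(k : ℕ) - (v - 1) + 2, hjlt⟩ : Fin (ℓ + 2)), hmem1⟩
          = Multiplicative.ofAdd
          ((FreeGroup.lift (wgen ℓ)
              (FreeGroup.of (⟨(k : ℕ) - (v - 1) + 2, hjlt⟩ : Fin (ℓ + 2)))).a,
           (FreeGroup.lift (wgen ℓ)
              (FreeGroup.of (⟨(k : ℕ) - (v - 1) + 2, hjlt⟩ : Fin (ℓ + 2)))).b) := rfl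
      rw [hval, psi_ofj ℓ _ hj2, bvec]
      simp only [dif_neg h]
      have hidx : (⟨((⟨(k : ℕ) - (v - 1) + 2, hjlt⟩ : Fin (ℓ + 2)) : ℕ) - 2,
            by have := k.isLt; omega⟩ : Fin ℓ)
          = ⟨(k : ℕ) - (v - 1), by have := k.isLt; omega⟩ := by
        apply Fin.ext
        simp
      rw [hidx]
  -- conclude
  have hup : (v - 1 + ℓ) ∈ {n : ℕ | ∃ S' : Finset ↥(Subgroup.closure sH),
      S'.card = n ∧ Subgroup.closure (S' : Set ↥(Subgroup.closure sH)) = ⊤} :=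
    ⟨S, hScard, hStop⟩
  refine le_antisymm (Nat.sInf_le hup) (le_csInf ⟨_, hup⟩ ?_)
  intro m hm
  exact le_card_of_linearIndependent θ (bvec ℓ v) hbb hmem hm

lemma grank_K (ℓ : ℕ) :
    grank ↥(Subgroup.closure
      ({FreeGroup.of (⟨0, by simp⟩ : Fin (ℓ + 2)), FreeGroup.of (⟨1, by simp⟩ : Fin (ℓ + 2))} :
        Set (FreeGroup (Fin (ℓ + 2))))) = 2 := by
  classical
  set e0 : Fin (ℓ + 2) := ⟨0, by simp⟩ with he0
  set e1 : Fin (ℓ + 2) := ⟨1, by simp⟩ with he1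
  set sK : Set (FreeGroup (Fin (ℓ + 2))) := {FreeGroup.of e0, FreeGroup.of e1} with hsK
  have hne : FreeGroup.of e0 ≠ FreeGroup.of e1 := by
    intro h
    have h2 := congrArg Fin.val (FreeGroup.of_injective h)
    simp [he0, he1] at h2
  -- upper bound
  set T : Finset (FreeGroup (Fin (ℓ + 2))) := {FreeGroup.of e0, FreeGroup.of e1} with hT
  have hTc : (T : Set (FreeGroup (Fin (ℓ + 2)))) = sK := by
    rw [hT, hsK]
    simp
  have hTcard : T.card = 2 := Finset.card_pair hne
  have hTH : ∀ g ∈ T, g ∈ Subgroup.closure sK := by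
    intro g hg
    exact Subgroup.subset_closure (hTc ▸ hg)
  set S : Finset ↥(Subgroup.closure sK) :=
    T.attach.image (fun t => ⟨t.1, hTH t.1 t.2⟩) with hS
  have hSinj : Function.Injective
      (fun (t : {x // x ∈ T}) => (⟨t.1, hTH t.1 t.2⟩ : ↥(Subgroup.closure sK))) := by
    intro t t' h
    have h2 := congrArg Subtype.val h
    exact Subtype.ext h2
  have hScard : S.card = 2 := by
    rw [hS, Finset.card_image_of_injective _ hSinj, Finset.card_attach, hTcard]
  have hStop : Subgroup.closure (S : Set ↥(Subgroup.closure sK)) = ⊤ := by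
    have hpre : (S : Set ↥(Subgroup.closure sK))
        = (Subgroup.closure sK).subtype ⁻¹' (T : Set (FreeGroup (Fin (ℓ + 2)))) := by
      ext x
      constructor
      · intro hx
        rw [hS] at hx
        simp only [Finset.coe_image, Set.mem_image, Finset.mem_coe, Finset.mem_attach] at hx
        obtain ⟨t, -, ht⟩ := hx
        rw [← ht]
        exact t.2
      · intro hx
        rw [hS]
        simp only [Finset.coe_image, Set.mem_image, Finset.mem_coe, Finset.mem_attach]
        exact ⟨⟨x.1, hx⟩, trivial, Subtype.ext rfl⟩
    rw [hpre, hTc]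
    exact Subgroup.closure_preimage_eq_top sK
  -- lower bound
  set fK : FreeGroup (Fin (ℓ + 2)) →* Multiplicative (Fin 2 → ℤ) :=
    FreeGroup.lift (fun (j : Fin (ℓ + 2)) => Multiplicative.ofAdd
      (if (j : ℕ) = 0 then Pi.single (0 : Fin 2) (1 : ℤ)
       else if (j : ℕ) = 1 then Pi.single (1 : Fin 2) (1 : ℤ) else 0)) with hfK
  set θK : ↥(Subgroup.closure sK) →* Multiplicative (Fin 2 → ℤ) :=
    fK.comp (Subgroup.closure sK).subtype with hθK
  have hb : LinearIndependent ℤ (fun (k : Fin 2) => Pi.single k (1 : ℤ)) := by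
    have hpi := (Pi.basisFun ℤ (Fin 2)).linearIndependent
    have hfn : ⇑(Pi.basisFun ℤ (Fin 2)) = fun (k : Fin 2) => Pi.single k (1 : ℤ) := by
      funext k
      exact Pi.basisFun_apply ℤ (Fin 2) k
    rwa [hfn] at hpi
  have hmem : ∀ k : Fin 2, Multiplicative.ofAdd (Pi.single k (1 : ℤ)) ∈ θK.range := by
    intro k
    by_cases hk : k = 0
    · subst hk
      have hm1 : FreeGroup.of e0 ∈ Subgroup.closure sK := by
        apply Subgroup.subset_closure
        rw [hsK]
        exact Set.mem_insert _ _
      refine ⟨⟨FreeGroup.of e0, hm1⟩, ?_⟩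
      show fK (FreeGroup.of e0) = _
      rw [hfK, FreeGroup.lift_apply_of]
      simp [he0]
    · have hk1 : k = 1 := by omega
      subst hk1
      have hm1 : FreeGroup.of e1 ∈ Subgroup.closure sK := by
        apply Subgroup.subset_closure
        rw [hsK]
        exact Set.mem_insert_iff.mpr (Or.inr rfl)
      refine ⟨⟨FreeGroup.of e1, hm1⟩, ?_⟩
      show fK (FreeGroup.of e1) = _
      rw [hfK, FreeGroup.lift_apply_of]
      simp [he1]
  have hup : (2 : ℕ) ∈ {n : ℕ | ∃ S' : Finset ↥(Subgroup.closure sK),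
      S'.card = n ∧ Subgroup.closure (S' : Set ↥(Subgroup.closure sK)) = ⊤} :=
    ⟨S, hScard, hStop⟩
  refine le_antisymm (Nat.sInf_le hup) (le_csInf ⟨_, hup⟩ ?_)
  intro m hm
  exact le_card_of_linearIndependent θK (fun (k : Fin 2) => Pi.single k (1 : ℤ)) hb hmem hm

/-- With `H = ⟨x₁ⁱx₂x₁^{-(i+1)} (0 ≤ i ≤ v-2), x₃, …, x_{ℓ+2}⟩` and `K = ⟨x₁, x₂⟩`
in the free group on `x₁, …, x_{ℓ+2}`, we have `r̄(H) = v + ℓ - 2`, `r̄(K) = 1`,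
`rank(H) = v + ℓ - 1` and `rank(K) = 2`. -/
theorem rbar_H_and_K (ℓ v : ℕ) (hℓ : 1 ≤ ℓ) (hv : 2 ≤ v)
    (x₁ x₂ : FreeGroup (Fin (ℓ + 2)))
    (hx₁ : x₁ = FreeGroup.of ⟨0, by omega⟩)
    (hx₂ : x₂ = FreeGroup.of ⟨1, by omega⟩)
    (H K : Subgroup (FreeGroup (Fin (ℓ + 2))))
    (hH : H = Subgroup.closure
      ({g | ∃ i : ℕ, i ≤ v - 2 ∧ g = x₁ ^ (i : ℤ) * x₂ * x₁ ^ (-((i : ℤ) + 1))} ∪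
       {g | ∃ j : Fin (ℓ + 2), 2 ≤ (j : ℕ) ∧ g = FreeGroup.of j}))
    (hK : K = Subgroup.closure {x₁, x₂}) :
    rbar ↥H = v + ℓ - 2 ∧ rbar ↥K = 1 ∧ grank ↥H = v + ℓ - 1 ∧ grank ↥K = 2 := by
  subst hx₁ hx₂ hH hK
  have h1 := grank_H ℓ v hℓ hv
  have h2 := grank_K ℓ
  refine ⟨?_, ?_, ?_, ?_⟩
  · show grank _ - 1 = v + ℓ - 2
    rw [h1]
    omega
  · show grank _ - 1 = 1
    rw [h2]
  · rw [h1]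
    omega
  · rw [h2]

end Main
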